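/- Let p be an odd prime, let μ' denote the set of (p-1)-st roots of unity in Z_p other than -1, and for each ξ ∈ μ' write (1+ξ)^{p-1} = 1 + p·z_ξ with z_ξ ∈ Z_p. Then Σ_{ξ∈μ'} (1+ξ)^2 · z_ξ ≡ -1/2 (mod p), i.e., 2·Σ_{ξ∈μ'} (1+ξ)^2 z_ξ ≡ -1 (mod p). -/

import Mathlib

open Polynomial Finset

lemma padic_toZMod_eq_zero_iff {p : ℕ} [Fact p.Prime] (x : ℤ_[p]) :
    PadicInt.toZMod x = 0 ↔ (p : ℤ_[p]) ∣ x := by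
  rw [← RingHom.mem_ker, PadicInt.ker_toZMod, PadicInt.maximalIdeal_eq_span_p,
    Ideal.mem_span_singleton]

lemma padic_isUnit_iff_toZMod {p : ℕ} [Fact p.Prime] (x : ℤ_[p]) :
    IsUnit x ↔ PadicInt.toZMod x ≠ 0 := by
  rw [ne_eq, padic_toZMod_eq_zero_iff, ← PadicInt.norm_lt_one_iff_dvd, ← PadicInt.not_isUnit_iff,
    not_not]

lemma exists_pr (p : ℕ) [Fact p.Prime] (hp : 2 < p) :
    ∃ ζ : ℤ_[p], IsPrimitiveRoot ζ (p - 1) := by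
  obtain ⟨g, hg⟩ := IsCyclic.exists_generator (α := (ZMod p)ˣ)
  have hord : orderOf g = p - 1 := by
    rw [orderOf_eq_card_of_forall_mem_zpowers hg, Nat.card_eq_fintype_card, ZMod.card_units p]
  set a : ℤ_[p] := ((g : ZMod p).val : ℤ_[p]) with ha_def
  have ha : PadicInt.toZMod a = (g : ZMod p) := by
    rw [ha_def, map_natCast, ZMod.natCast_val, ZMod.cast_id]
  set F : Polynomial ℤ_[p] := X ^ (p - 1) - 1 with hF
  have hFeval : ∀ x : ℤ_[p], F.eval x = x ^ (p - 1) - 1 := by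
    intro x; simp [hF]
  have hFder : F.derivative = C ((p - 1 : ℕ) : ℤ_[p]) * X ^ (p - 2) := by
    rw [hF]
    have : (1 : Polynomial ℤ_[p]) = C 1 := by simp
    rw [this, derivative_sub, derivative_C, derivative_X_pow, sub_zero]
    rw [Nat.sub_sub]
  have hgp : (g : ZMod p) ^ (p - 1) = 1 := by
    have := pow_orderOf_eq_one g
    rw [hord] at this
    simpa using congrArg (Units.val) this
  have hDunit : IsUnit (F.derivative.eval a) := by
    rw [hFder]
    simp only [eval_mul, eval_C, eval_pow, eval_X]
    rw [padic_isUnit_iff_toZMod, map_mul, map_pow, ha, map_natCast]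
    apply mul_ne_zero
    · have : ((p - 1 : ℕ) : ZMod p) = -1 := by
        have h1 : ((p - 1 : ℕ) : ZMod p) = (p : ZMod p) - 1 := by
          have : 1 ≤ p := by omega
          push_cast [Nat.cast_sub this]; ring
        rw [h1, ZMod.natCast_self, zero_sub]
      rw [this]
      simp
    · exact pow_ne_zero _ (g.isUnit.ne_zero)
  have hnorm1 : ‖F.derivative.eval a‖ = 1 := PadicInt.isUnit_iff.mp hDunit
  have hFa : (p : ℤ_[p]) ∣ F.eval a := by
    rw [← padic_toZMod_eq_zero_iff, hFeval, map_sub, map_pow, ha, hgp, map_one, sub_self]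
  have hnorm : ‖F.eval a‖ < ‖F.derivative.eval a‖ ^ 2 := by
    rw [hnorm1, one_pow]
    exact (PadicInt.norm_lt_one_iff_dvd _).mpr hFa
  obtain ⟨ζ, hroot, hclose, -, -⟩ := hensels_lemma hnorm
  have hζ1 : ζ ^ (p - 1) = 1 := by
    have h := hroot
    rw [Polynomial.coe_aeval_eq_eval, hFeval, sub_eq_zero] at h
    exact h
  have hζg : PadicInt.toZMod ζ = g := by
    have hdvd : (p : ℤ_[p]) ∣ ζ - a :=
      (PadicInt.norm_lt_one_iff_dvd _).mp (by rwa [Polynomial.coe_aeval_eq_eval, hnorm1] at hclose)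
    have h0 : PadicInt.toZMod (ζ - a) = 0 := (padic_toZMod_eq_zero_iff _).mpr hdvd
    rw [map_sub, ha, sub_eq_zero] at h0
    exact h0
  refine ⟨ζ, hζ1, fun l hl => ?_⟩
  have h1 : (g : ZMod p) ^ l = 1 := by
    have := congrArg PadicInt.toZMod hl
    simpa [map_pow, hζg] using this
  have h2 : g ^ l = 1 := Units.ext (by simpa using h1)
  rw [← hord]
  exact orderOf_dvd_of_pow_eq_one h2

lemma sum_pow_root {p : ℕ} [Fact p.Prime] {ζ : ℤ_[p]} (hζ : IsPrimitiveRoot ζ (p - 1))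
    (k : ℕ) :
    ∑ i ∈ range (p - 1), (ζ ^ k) ^ i = if (p - 1) ∣ k then ((p - 1 : ℕ) : ℤ_[p]) else 0 := by
  split_ifs with h
  · rw [(hζ.pow_eq_one_iff_dvd k).mpr h]
    simp
  · have hne : ζ ^ k ≠ 1 := fun hh => h ((hζ.pow_eq_one_iff_dvd k).mp hh)
    have hpow : (ζ ^ k) ^ (p - 1) = 1 := by
      rw [← pow_mul, mul_comm, pow_mul, hζ.pow_eq_one, one_pow]
    have hg := geom_sum_mul (ζ ^ k) (p - 1)
    rw [hpow, sub_self] at hg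
    rcases mul_eq_zero.mp hg with h1 | h2
    · exact h1
    · exact absurd (sub_eq_zero.mp h2) hne

theorem stmt_19 (p : ℕ) [Fact p.Prime] (hp : 2 < p)
    (S : Finset ℤ_[p]) (hS : ∀ ξ : ℤ_[p], ξ ∈ S ↔ (ξ^(p - 1) = 1 ∧ ξ ≠ -1))
    (z : ℤ_[p] → ℤ_[p]) (hz : ∀ ξ ∈ S, (1 + ξ)^(p - 1) = 1 + (p : ℤ_[p]) * z ξ) :
    (p : ℤ_[p]) ∣ 2 * (∑ ξ ∈ S, (1 + ξ)^2 * z ξ) + 1 := by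
  classical
  have hprime : p.Prime := Fact.out
  have hpne : (p : ℤ_[p]) ≠ 0 := Nat.cast_ne_zero.mpr (by omega)
  have hodd : Odd p := hprime.odd_of_ne_two (by omega)
  have heven : Even (p - 1) := Nat.Odd.sub_odd hodd odd_one
  -- case p = 3
  rcases eq_or_lt_of_le (Nat.succ_le_of_lt hp) with hp3 | hp5
  · -- p = 3
    have hp3' : p = 3 := hp3.symm
    subst hp3'
    have hS3 : S = {1} := by
      ext x
      rw [hS]
      constructor
      · rintro ⟨h1, h2⟩
        have hfac : (x - 1) * (x + 1) = 0 := by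
          have : x ^ (3 - 1) = x ^ 2 := by norm_num
          rw [this] at h1
          linear_combination h1
        rcases mul_eq_zero.mp hfac with h | h
        · simp [sub_eq_zero.mp h]
        · exact absurd (eq_neg_of_add_eq_zero_left h) h2
      · rintro h
        simp only [Finset.mem_singleton] at h
        subst h
        refine ⟨by norm_num, by intro h; rw [← sub_eq_zero] at h; norm_num at h⟩
    have h1S : (1 : ℤ_[3]) ∈ S := by rw [hS3]; exact Finset.mem_singleton_self 1
    have hz1 := hz 1 h1S
    norm_num at hz1
    -- hz1 : 4 = 1 + 3 * z 1  (roughly)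
    have hz1' : z 1 = 1 := by
      have h3 : (3 : ℤ_[3]) * z 1 = 3 * 1 := by linear_combination -hz1
      exact mul_left_cancel₀ (by exact_mod_cast hpne) h3
    rw [hS3]
    rw [Finset.sum_singleton, hz1']
    refine ⟨3, by norm_num⟩
  · -- p > 3
    have hne1 : (-1 : ℤ_[p]) ^ (p - 1) = 1 := heven.neg_one_pow
    have hnotS : (-1 : ℤ_[p]) ∉ S := fun h => ((hS _).mp h).2 rfl
    set T : Finset ℤ_[p] := insert (-1) S with hT
    have hTmem : ∀ ξ : ℤ_[p], ξ ∈ T ↔ ξ ^ (p - 1) = 1 := by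
      intro ξ
      rw [hT, Finset.mem_insert, hS]
      constructor
      · rintro (rfl | ⟨h, -⟩)
        exacts [hne1, h]
      · intro h
        by_cases hξ : ξ = -1
        exacts [Or.inl hξ, Or.inr ⟨h, hξ⟩]
    obtain ⟨ζ, hζ⟩ := exists_pr p hp
    have hppos : 0 < p - 1 := by omega
    have hinj : ∀ i ∈ range (p - 1), ∀ j ∈ range (p - 1),
        ζ ^ i = ζ ^ j → i = j := fun i hi j hj h =>
      hζ.pow_inj (mem_range.mp hi) (mem_range.mp hj) h
    have hpowmem : ∀ i : ℕ, (ζ ^ i) ^ (p - 1) = 1 := by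
      intro i
      rw [← pow_mul, mul_comm, pow_mul, hζ.pow_eq_one, one_pow]
    have himsub : (range (p - 1)).image (fun i => ζ ^ i) ⊆ T := by
      intro x hx
      obtain ⟨i, -, rfl⟩ := Finset.mem_image.mp hx
      exact (hTmem _).mpr (hpowmem i)
    have hTcard : T.card ≤ p - 1 := by
      have hsub : T ⊆ (Polynomial.nthRoots (p - 1) (1 : ℤ_[p])).toFinset := by
        intro x hx
        rw [Multiset.mem_toFinset, Polynomial.mem_nthRoots hppos]
        exact (hTmem x).mp hx
      calc T.card ≤ (Polynomial.nthRoots (p - 1) (1 : ℤ_[p])).toFinset.card :=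
            Finset.card_le_card hsub
        _ ≤ Multiset.card (Polynomial.nthRoots (p - 1) (1 : ℤ_[p])) :=
            Multiset.toFinset_card_le _
        _ ≤ p - 1 := Polynomial.card_nthRoots _ _
    have himage : (range (p - 1)).image (fun i => ζ ^ i) = T := by
      apply Finset.eq_of_subset_of_card_le himsub
      rw [Finset.card_image_of_injOn (fun i hi j hj h => hinj i hi j hj h),
        Finset.card_range]
      exact hTcard
    have hsumT : ∀ f : ℤ_[p] → ℤ_[p], ∑ ξ ∈ T, f ξ = ∑ i ∈ range (p - 1), f (ζ ^ i) := by
      intro f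
      rw [← himage, Finset.sum_image hinj]
    -- binomial expansion of power sums
    have hbin : ∀ m : ℕ, ∑ i ∈ range (p - 1), (1 + ζ ^ i) ^ m
        = ∑ k ∈ range (m + 1),
            (if (p - 1) ∣ k then ((m.choose k * (p - 1) : ℕ) : ℤ_[p]) else 0) := by
      intro m
      have hexp : ∀ i : ℕ, (1 + ζ ^ i) ^ m
          = ∑ k ∈ range (m + 1), (ζ ^ k) ^ i * (m.choose k : ℤ_[p]) := by
        intro i
        rw [add_comm, add_pow]
        refine Finset.sum_congr rfl fun k hk => ?_
        rw [one_pow, mul_one, ← pow_mul, mul_comm i k, pow_mul]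
      rw [Finset.sum_congr rfl fun i _ => hexp i, Finset.sum_comm]
      refine Finset.sum_congr rfl fun k hk => ?_
      rw [← Finset.sum_mul, sum_pow_root hζ k]
      split_ifs with h
      · push_cast
        ring
      · simp
    -- the two power sums
    have hfilter1 : (range (p + 2)).filter (fun k => (p - 1) ∣ k) = {0, p - 1} := by
      ext k
      simp only [Finset.mem_filter, mem_range, Finset.mem_insert, Finset.mem_singleton]
      constructor
      · rintro ⟨hk, j, rfl⟩
        rcases Nat.lt_or_ge j 2 with hj | hj
        · interval_cases j <;> omega
        · exfalso
          have h2 : (p - 1) * 2 ≤ (p - 1) * j := Nat.mul_le_mul_left _ hj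
          omega
      · rintro (rfl | rfl)
        exacts [⟨by omega, dvd_zero _⟩, ⟨by omega, dvd_rfl⟩]
    have hfilter2 : (range 3).filter (fun k => (p - 1) ∣ k) = {0} := by
      ext k
      simp only [Finset.mem_filter, mem_range, Finset.mem_singleton]
      constructor
      · rintro ⟨hk, j, rfl⟩
        rcases Nat.eq_zero_or_pos j with rfl | hj
        · simp
        · exfalso
          have h2 : (p - 1) * 1 ≤ (p - 1) * j := Nat.mul_le_mul_left _ hj
          omega
      · rintro rfl
        exact ⟨by omega, dvd_zero _⟩
    have hsum1 : ∑ ξ ∈ T, (1 + ξ) ^ (p + 1)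
        = ((p - 1 : ℕ) : ℤ_[p]) + (((p + 1).choose (p - 1) * (p - 1) : ℕ) : ℤ_[p]) := by
      rw [hsumT, hbin (p + 1)]
      have hr : p + 1 + 1 = p + 2 := by omega
      rw [hr, ← Finset.sum_filter, hfilter1]
      rw [Finset.sum_insert (by simp only [Finset.mem_singleton]; omega), Finset.sum_singleton]
      norm_num
    have hsum2 : ∑ ξ ∈ T, (1 + ξ) ^ 2 = ((p - 1 : ℕ) : ℤ_[p]) := by
      rw [hsumT, hbin 2, ← Finset.sum_filter, hfilter2, Finset.sum_singleton]
      norm_num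
    -- choose identity
    have hchoose : 2 * ((p + 1).choose (p - 1)) = (p + 1) * p := by
      have h1 : (p + 1).choose (p - 1) = (p + 1).choose 2 := by
        have : p + 1 - 2 = p - 1 := by omega
        rw [← this, Nat.choose_symm (by omega)]
      rw [h1, Nat.choose_two_right]
      have h2 : 2 ∣ (p + 1) * p := by
        rcases hodd with ⟨m, rfl⟩
        exact ⟨(m + 1) * (2 * m + 1), by ring⟩
      have h3 : (p + 1) * (p + 1 - 1) = (p + 1) * p := by
        rw [Nat.add_sub_cancel]
      rw [h3, Nat.mul_div_cancel' h2]
    -- main identity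
    have hmain : (p : ℤ_[p]) * (2 * (∑ ξ ∈ S, (1 + ξ) ^ 2 * z ξ) + 1) = (p : ℤ_[p]) ^ 3 := by
      have hterm : ∀ ξ ∈ S, (1 + ξ) ^ 2 * ((p : ℤ_[p]) * z ξ)
          = (1 + ξ) ^ (p + 1) - (1 + ξ) ^ 2 := by
        intro ξ hξ
        have h1 : (p : ℤ_[p]) * z ξ = (1 + ξ) ^ (p - 1) - 1 := by
          rw [hz ξ hξ]; ring
        rw [h1, mul_sub, mul_one, ← pow_add]
        congr 2
        omega
      have hstep1 : (p : ℤ_[p]) * (2 * (∑ ξ ∈ S, (1 + ξ) ^ 2 * z ξ) + 1)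
          = 2 * (∑ ξ ∈ S, ((1 + ξ) ^ (p + 1) - (1 + ξ) ^ 2)) + p := by
        have heq : ∑ ξ ∈ S, ((1 + ξ) ^ (p + 1) - (1 + ξ) ^ 2)
            = ∑ ξ ∈ S, (1 + ξ) ^ 2 * ((p : ℤ_[p]) * z ξ) :=
          (Finset.sum_congr rfl hterm).symm
        have h2 : ∑ ξ ∈ S, (1 + ξ) ^ 2 * ((p : ℤ_[p]) * z ξ)
            = (p : ℤ_[p]) * ∑ ξ ∈ S, (1 + ξ) ^ 2 * z ξ := by
          rw [Finset.mul_sum]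
          exact Finset.sum_congr rfl fun ξ _ => by ring
        rw [heq, h2]
        ring
      have hSzero : ((1 + (-1 : ℤ_[p])) ^ (p + 1) - (1 + (-1 : ℤ_[p])) ^ 2) = 0 := by
        rw [add_neg_cancel, zero_pow (by omega), zero_pow (by omega), sub_zero]
      have hstep2 : ∑ ξ ∈ S, ((1 + ξ) ^ (p + 1) - (1 + ξ) ^ 2)
          = ∑ ξ ∈ T, ((1 + ξ) ^ (p + 1) - (1 + ξ) ^ 2) := by
        rw [hT, Finset.sum_insert hnotS, hSzero, zero_add]
      rw [hstep1, hstep2, Finset.sum_sub_distrib, hsum1, hsum2]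
      have hcast1 : ((p - 1 : ℕ) : ℤ_[p]) = (p : ℤ_[p]) - 1 := by
        push_cast [Nat.cast_sub (by omega : 1 ≤ p)]
        ring
      have hcast2 : ((((p + 1).choose (p - 1)) * (p - 1) : ℕ) : ℤ_[p])
          = (((p + 1).choose (p - 1) : ℕ) : ℤ_[p]) * ((p : ℤ_[p]) - 1) := by
        push_cast [Nat.cast_sub (by omega : 1 ≤ p)]
        ring
      have hc : 2 * (((p + 1).choose (p - 1) : ℕ) : ℤ_[p]) = ((p : ℤ_[p]) + 1) * p := by
        have := congrArg (fun n : ℕ => (n : ℤ_[p])) hchoose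
        push_cast at this
        exact this
      rw [hcast1, hcast2]
      linear_combination ((p : ℤ_[p]) - 1) * hc
    have hfin : 2 * (∑ ξ ∈ S, (1 + ξ) ^ 2 * z ξ) + 1 = (p : ℤ_[p]) ^ 2 := by
      apply mul_left_cancel₀ hpne
      rw [hmain]
      ring
    rw [hfin]
    exact dvd_pow_self _ (by norm_num)
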